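/- Let G1 and G2 be finitely generated groups. The free product G1 * G2 is hyperbolic if and only if both G1 and G2 are hyperbolic. -/

import Mathlib

/-- A group is hyperbolic if it admits a finite presentation with a linear isoperimetric
(Dehn) function: every word in the kernel of the presentation map is a product of a number of
conjugates of relators or their inverses that is linearly bounded in terms of its word length. -/
def IsHyperbolic (G : Type*) [Group G] : Prop :=
  ∃ (X : Type) (_ : Finite X) (_ : DecidableEq X) (φ : FreeGroup X →* G)
    (R : Finset (FreeGroup X)) (C D : ℕ),
    Function.Surjective φ ∧
    φ.ker = Subgroup.normalClosure (R : Set (FreeGroup X)) ∧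
    ∀ w ∈ φ.ker, ∃ l : List (FreeGroup X),
      w = l.prod ∧ l.length ≤ C * w.toWord.length + D ∧
      ∀ g ∈ l, ∃ r ∈ R, ∃ c : FreeGroup X, g = c * r * c⁻¹ ∨ g = c * r⁻¹ * c⁻¹

namespace HypProof
open FreeGroup Subgroup

variable {α β : Type*}

/-- The conjugate-of-relator condition from `IsHyperbolic`. -/
def ConjOf {X : Type*} (R : Finset (FreeGroup X)) (g : FreeGroup X) : Prop :=
  ∃ r ∈ R, ∃ c : FreeGroup X, g = c * r * c⁻¹ ∨ g = c * r⁻¹ * c⁻¹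

lemma ConjOf.conj {X : Type*} {R : Finset (FreeGroup X)} {g : FreeGroup X}
    (h : ConjOf R g) (u : FreeGroup X) : ConjOf R (u * g * u⁻¹) := by
  obtain ⟨r, hr, c, hc | hc⟩ := h
  · exact ⟨r, hr, u * c, Or.inl (by rw [hc]; group)⟩
  · exact ⟨r, hr, u * c, Or.inr (by rw [hc]; group)⟩

lemma ConjOf.mem_nc {X : Type*} {R : Finset (FreeGroup X)} {g : FreeGroup X}
    (h : ConjOf R g) : g ∈ Subgroup.normalClosure (R : Set (FreeGroup X)) := by
  obtain ⟨r, hr, c, hc | hc⟩ := h <;> subst hc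
  · exact Subgroup.normalClosure_normal.conj_mem _
      (Subgroup.subset_normalClosure (by exact_mod_cast hr)) _
  · exact Subgroup.normalClosure_normal.conj_mem _
      (inv_mem (Subgroup.subset_normalClosure (by exact_mod_cast hr))) _

lemma prod_mem_nc {X : Type*} {R : Finset (FreeGroup X)} :
    ∀ l : List (FreeGroup X), (∀ g ∈ l, ConjOf R g) →
      l.prod ∈ Subgroup.normalClosure (R : Set (FreeGroup X)) := by
  intro l
  induction l with
  | nil => intro _; simp [one_mem]
  | cons a l ih =>
    intro h
    rw [List.prod_cons]
    exact mul_mem ((h a (by simp)).mem_nc) (ih fun g hg => h g (by simp [hg]))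

lemma ConjOf.map {X Y : Type*} (f : FreeGroup X →* FreeGroup Y)
    {R : Finset (FreeGroup X)} {R' : Finset (FreeGroup Y)}
    (hR : ∀ r ∈ R, f r ∈ R') {g : FreeGroup X} (h : ConjOf R g) : ConjOf R' (f g) := by
  obtain ⟨r, hr, c, hc | hc⟩ := h <;> subst hc
  · exact ⟨f r, hR r hr, f c, Or.inl (by simp)⟩
  · exact ⟨f r, hR r hr, f c, Or.inr (by simp)⟩

lemma prod_map_conj (c : FreeGroup α) (l : List (FreeGroup α)) :
    (l.map fun g => c * g * c⁻¹).prod = c * l.prod * c⁻¹ := by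
  induction l with
  | nil => simp
  | cons a l ih => simp only [List.map_cons, List.prod_cons, ih]; group

lemma mk_cons (a : α × Bool) (L : List (α × Bool)) :
    FreeGroup.mk (a :: L) = FreeGroup.mk [a] * FreeGroup.mk L := by
  rw [FreeGroup.mul_mk]; rfl

lemma mk_singleton_false (x : α) : FreeGroup.mk [(x, false)] = (FreeGroup.of x)⁻¹ := by
  rw [FreeGroup.of, FreeGroup.inv_mk]; rfl

lemma norm_hom_mk_le [DecidableEq α] [DecidableEq β] (f : FreeGroup α →* FreeGroup β) (A : ℕ)
    (hA : ∀ a, FreeGroup.norm (f (FreeGroup.of a)) ≤ A) :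
    ∀ L : List (α × Bool), FreeGroup.norm (f (FreeGroup.mk L)) ≤ A * L.length := by
  intro L
  induction L with
  | nil =>
    have : FreeGroup.mk ([] : List (α × Bool)) = (1 : FreeGroup α) := rfl
    simp [this]
  | cons a L ih =>
    have h1 : FreeGroup.norm (f (FreeGroup.mk [a])) ≤ A := by
      obtain ⟨x, b⟩ := a
      cases b
      · rw [mk_singleton_false, _root_.map_inv, FreeGroup.norm_inv_eq]; exact hA x
      · exact hA x
    calc FreeGroup.norm (f (FreeGroup.mk (a :: L)))
        ≤ FreeGroup.norm (f (FreeGroup.mk [a])) + FreeGroup.norm (f (FreeGroup.mk L)) := by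
          rw [mk_cons, _root_.map_mul]; exact FreeGroup.norm_mul_le _ _
      _ ≤ A + A * L.length := Nat.add_le_add h1 ih
      _ = A * (a :: L).length := by simp [List.length_cons, Nat.mul_add, Nat.add_comm]

lemma norm_hom_le [DecidableEq α] [DecidableEq β] (f : FreeGroup α →* FreeGroup β) (A : ℕ)
    (hA : ∀ a, FreeGroup.norm (f (FreeGroup.of a)) ≤ A) (w : FreeGroup α) :
    FreeGroup.norm (f w) ≤ A * FreeGroup.norm w := by
  have := norm_hom_mk_le f A hA w.toWord
  rwa [FreeGroup.mk_toWord] at this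

lemma endo_diff (f : FreeGroup α →* FreeGroup α) :
    ∀ L : List (α × Bool), ∃ l : List (FreeGroup α),
      FreeGroup.mk L * (f (FreeGroup.mk L))⁻¹ = l.prod ∧ l.length = L.length ∧
      ∀ g ∈ l, ∃ a : α, ∃ c : FreeGroup α,
        g = c * (FreeGroup.of a * (f (FreeGroup.of a))⁻¹) * c⁻¹ ∨
        g = c * (FreeGroup.of a * (f (FreeGroup.of a))⁻¹)⁻¹ * c⁻¹ := by
  intro L
  induction L with
  | nil =>
    refine ⟨[], ?_, rfl, by simp⟩
    have : FreeGroup.mk ([] : List (α × Bool)) = (1 : FreeGroup α) := rfl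
    simp [this]
  | cons a L ih =>
    obtain ⟨l, hprod, hlen, hconj⟩ := ih
    set u : FreeGroup α := FreeGroup.mk [a] with hu
    have hterm : ∃ a' : α, ∃ c : FreeGroup α,
        u * (f u)⁻¹ = c * (FreeGroup.of a' * (f (FreeGroup.of a'))⁻¹) * c⁻¹ ∨
        u * (f u)⁻¹ = c * (FreeGroup.of a' * (f (FreeGroup.of a'))⁻¹)⁻¹ * c⁻¹ := by
      obtain ⟨x, b⟩ := a
      cases b
      · refine ⟨x, (FreeGroup.of x)⁻¹, Or.inr ?_⟩
        rw [hu, mk_singleton_false, _root_.map_inv]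
        group
      · refine ⟨x, 1, Or.inl ?_⟩
        have hx : u = FreeGroup.of x := rfl
        rw [hx]; group
    refine ⟨(l.map fun g => u * g * u⁻¹) ++ [u * (f u)⁻¹], ?_, by simp [hlen], ?_⟩
    · rw [List.prod_append, List.prod_singleton,
        prod_map_conj u l, ← hprod]
      rw [mk_cons, ← hu, _root_.map_mul, mul_inv_rev]
      group
    · intro g hg
      rcases List.mem_append.1 hg with hg | hg
      · obtain ⟨g', hg', rfl⟩ := List.mem_map.1 hg
        obtain ⟨a', c, hc | hc⟩ := hconj g' hg'
        · exact ⟨a', u * c, Or.inl (by rw [hc]; group)⟩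
        · exact ⟨a', u * c, Or.inr (by rw [hc]; group)⟩
      · rw [List.mem_singleton.1 hg]
        exact hterm


section Retract
open FreeGroup Subgroup Function

lemma ConjOf.mono {X : Type*} {R R' : Finset (FreeGroup X)} (hRR : R ⊆ R')
    {g : FreeGroup X} (h : ConjOf R g) : ConjOf R' g := by
  obtain ⟨r, hr, c, hc⟩ := h
  exact ⟨r, hRR hr, c, hc⟩

/-- A finitely generated retract of a hyperbolic group is hyperbolic. -/
lemma retract {G H : Type*} [Group G] [Group H] [Group.FG H]
    (i : H →* G) (r : G →* H) (hri : ∀ h, r (i h) = h)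
    (hG : IsHyperbolic G) : IsHyperbolic H := by
  classical
  obtain ⟨X, hXfin, hXdec, φ, R, C, D, hφsurj, hφker, hφarea⟩ := hG
  obtain ⟨S, hS⟩ : ∃ S : Finset H, Subgroup.closure (S : Set H) = ⊤ := Group.fg_def.mp ‹_›
  set Y : Type := Fin (Fintype.card S) with hY
  let e : Y ≃ ↥S := (Fintype.equivFin ↥S).symm
  let ψ : FreeGroup Y →* H := FreeGroup.lift fun y => ((e y : ↥S) : H)
  have hrange : Set.range (fun y : Y => ((e y : ↥S) : H)) = (S : Set H) := by
    ext a
    constructor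
    · rintro ⟨y, rfl⟩; exact (e y).2
    · intro ha; exact ⟨e.symm ⟨a, ha⟩, by simp⟩
  have hψsurj : Function.Surjective ψ := by
    rw [← MonoidHom.range_eq_top]
    rw [show ψ = FreeGroup.lift fun y => ((e y : ↥S) : H) from rfl,
      FreeGroup.range_lift_eq_closure, hrange, hS]
  -- lift of generators
  let hh : FreeGroup Y →* FreeGroup X := FreeGroup.lift fun y =>
    Function.surjInv hφsurj (i (ψ (FreeGroup.of y)))
  have hφh : ∀ w, φ (hh w) = i (ψ w) := by
    intro w
    have : φ.comp hh = i.comp ψ := by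
      apply FreeGroup.ext_hom
      intro y
      simp only [MonoidHom.comp_apply]
      show φ (hh (FreeGroup.of y)) = i (ψ (FreeGroup.of y))
      rw [show hh (FreeGroup.of y) = Function.surjInv hφsurj (i (ψ (FreeGroup.of y))) from
        FreeGroup.lift_apply_of]
      exact Function.surjInv_eq hφsurj _
    exact DFunLike.congr_fun this w
  let kk : FreeGroup X →* FreeGroup Y := FreeGroup.lift fun x =>
    Function.surjInv hψsurj (r (φ (FreeGroup.of x)))
  have hψk : ∀ w, ψ (kk w) = r (φ w) := by
    intro w
    have : ψ.comp kk = r.comp φ := by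
      apply FreeGroup.ext_hom
      intro x
      simp only [MonoidHom.comp_apply]
      rw [show kk (FreeGroup.of x) = Function.surjInv hψsurj (r (φ (FreeGroup.of x))) from
        FreeGroup.lift_apply_of]
      exact Function.surjInv_eq hψsurj _
    exact DFunLike.congr_fun this w
  let f : FreeGroup Y →* FreeGroup Y := kk.comp hh
  have hψf : ∀ w, ψ (f w) = ψ w := by
    intro w
    show ψ (kk (hh w)) = ψ w
    rw [hψk, hφh, hri]
  -- the norm bound constant
  let A : ℕ := Finset.univ.sup fun y : Y => FreeGroup.norm (hh (FreeGroup.of y))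
  have hA : ∀ w, FreeGroup.norm (hh w) ≤ A * FreeGroup.norm w :=
    norm_hom_le hh A fun y => Finset.le_sup (f := fun y : Y => FreeGroup.norm (hh (FreeGroup.of y))) (Finset.mem_univ y)
  -- relators
  let T : Finset (FreeGroup Y) :=
    Finset.univ.image fun y : Y => FreeGroup.of y * (f (FreeGroup.of y))⁻¹
  let R' : Finset (FreeGroup Y) := R.image kk ∪ T
  -- the area estimate
  have harea : ∀ w ∈ ψ.ker, ∃ l : List (FreeGroup Y),
      w = l.prod ∧ l.length ≤ (C * A + 1) * FreeGroup.norm w + D ∧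
      ∀ g ∈ l, ConjOf R' g := by
    intro w hw
    have hhw : hh w ∈ φ.ker := by
      rw [MonoidHom.mem_ker, hφh, show ψ w = 1 from hw, _root_.map_one]
    obtain ⟨l, hl, hlen, hconj⟩ := hφarea (hh w) hhw
    obtain ⟨l1, hl1, hlen1, hconj1⟩ := endo_diff f w.toWord
    rw [FreeGroup.mk_toWord] at hl1
    refine ⟨l1 ++ l.map kk, ?_, ?_, ?_⟩
    · rw [List.prod_append, List.prod_hom l kk, ← hl, ← hl1]
      have hfw : kk (hh w) = f w := rfl
      rw [hfw]
      group
    · rw [List.length_append, List.length_map, hlen1]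
      have h2 : l.length ≤ C * (A * FreeGroup.norm w) + D :=
        le_trans hlen (by
          have := hA w
          have : C * (hh w).toWord.length ≤ C * (A * FreeGroup.norm w) :=
            Nat.mul_le_mul_left C (hA w)
          omega)
      have : w.toWord.length = FreeGroup.norm w := rfl
      calc w.toWord.length + l.length
          ≤ FreeGroup.norm w + (C * (A * FreeGroup.norm w) + D) := by omega
        _ = (C * A + 1) * FreeGroup.norm w + D := by ring
    · intro g hg
      rcases List.mem_append.1 hg with hg | hg
      · obtain ⟨a, c, hc⟩ := hconj1 g hg
        refine ConjOf.mono (Finset.subset_union_right) ?_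
        exact ⟨FreeGroup.of a * (f (FreeGroup.of a))⁻¹,
          Finset.mem_image.2 ⟨a, Finset.mem_univ a, rfl⟩, c, hc⟩
      · obtain ⟨g', hg', rfl⟩ := List.mem_map.1 hg
        refine ConjOf.mono (Finset.subset_union_left) ?_
        exact ConjOf.map kk (fun r hr => Finset.mem_image_of_mem kk hr) (hconj g' hg')
  -- relators are in the kernel
  have hRker : (R' : Set (FreeGroup Y)) ⊆ (ψ.ker : Set (FreeGroup Y)) := by
    intro g hg
    rcases Finset.mem_union.1 (by exact_mod_cast hg) with hg | hg
    · obtain ⟨ρ, hρ, rfl⟩ := Finset.mem_image.1 hg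
      have hρker : ρ ∈ φ.ker := by
        rw [hφker]
        exact Subgroup.subset_normalClosure (by exact_mod_cast hρ)
      simp only [SetLike.mem_coe, MonoidHom.mem_ker]
      rw [hψk, show φ ρ = 1 from hρker, _root_.map_one]
    · obtain ⟨y, _, rfl⟩ := Finset.mem_image.1 hg
      simp only [SetLike.mem_coe, MonoidHom.mem_ker, _root_.map_mul, _root_.map_inv]
      rw [hψf]
      group
  refine ⟨Y, inferInstance, inferInstance, ψ, R', C * A + 1, D, hψsurj, ?_, ?_⟩
  · apply le_antisymm
    · intro w hw
      obtain ⟨l, hl, _, hconj⟩ := harea w hw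
      rw [hl]
      exact prod_mem_nc l hconj
    · exact Subgroup.normalClosure_le_normal hRker
  · intro w hw
    obtain ⟨l, hl, hlen, hconj⟩ := harea w hw
    exact ⟨l, hl, hlen, fun g hg => hconj g hg⟩

end Retract


section Blocks
variable {α : Type*} (side : α → Bool)

/-- Split a list into maximal consecutive blocks on which `side` is constant. -/
def blocks : List α → List (List α)
  | [] => []
  | a :: L =>
    (a :: L.takeWhile fun b => side b == side a) ::
      blocks (L.dropWhile fun b => side b == side a)
  termination_by L => L.length
  decreasing_by
    simp only [List.length_cons]
    exact Nat.lt_succ_of_le ((List.dropWhile_sublist _).length_le)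

lemma dropWhile_head_false (p : α → Bool) :
    ∀ (L : List α) {a t}, L.dropWhile p = a :: t → p a = false := by
  intro L
  induction L with
  | nil => intro a t h; simp at h
  | cons x L ih =>
    intro a t h
    by_cases hx : p x
    · rw [List.dropWhile_cons_of_pos hx] at h; exact ih h
    · rw [List.dropWhile_cons_of_neg hx] at h
      cases h
      exact Bool.eq_false_iff.2 hx

lemma mem_first_block {a : α} {p : α}
    (hp : p ∈ a :: List.takeWhile (fun b => side b == side a) L) : side p = side a := by
  rcases List.mem_cons.1 hp with rfl | hp
  · rfl
  · simpa using List.mem_takeWhile_imp hp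

lemma blocks_flatten : ∀ L : List α, (blocks side L).flatten = L := by
  intro L
  induction L using blocks.induct side with
  | case1 => simp [blocks]
  | case2 a L ih =>
    rw [blocks, List.flatten_cons, ih, List.cons_append, List.takeWhile_append_dropWhile]

lemma blocks_ne_nil : ∀ L : List α, ∀ B ∈ blocks side L, B ≠ [] := by
  intro L
  induction L using blocks.induct side with
  | case1 => intro B hB; simp [blocks] at hB
  | case2 a L ih =>
    intro B hB
    rw [blocks, List.mem_cons] at hB
    rcases hB with rfl | hB
    · simp
    · exact ih B hB

lemma blocks_const : ∀ L : List α, ∀ B ∈ blocks side L, ∃ s, ∀ p ∈ B, side p = s := by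
  intro L
  induction L using blocks.induct side with
  | case1 => intro B hB; simp [blocks] at hB
  | case2 a L ih =>
    intro B hB
    rw [blocks, List.mem_cons] at hB
    rcases hB with rfl | hB
    · exact ⟨side a, fun p hp => mem_first_block side hp⟩
    · exact ih B hB

lemma blocks_chain : ∀ L : List α,
    (blocks side L).Chain' fun B B' => ∀ p ∈ B, ∀ q ∈ B', side p ≠ side q := by
  intro L
  induction L using blocks.induct side with
  | case1 => simp [blocks, List.Chain']
  | case2 a L ih =>
    rw [blocks]
    simp only [List.Chain', List.isChain_cons]
    refine ⟨?_, ih⟩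
    intro B' hB'
    rcases hd : L.dropWhile (fun b => side b == side a) with _ | ⟨a', t⟩
    · rw [hd] at hB'; simp [blocks] at hB'
    · rw [hd, blocks] at hB'
      simp only [List.head?_cons, Option.mem_some_iff] at hB'
      subst hB'
      intro p hp q hq
      rw [mem_first_block side hp, mem_first_block side hq]
      have := dropWhile_head_false (fun b => side b == side a) L hd
      simpa using Ne.symm (by simpa using this)

end Blocks

open Monoid in
lemma alt_prod_ne_one {ι : Type*} {M : ι → Type*} [∀ i, Monoid (M i)]
    (l : List (Σ i, M i)) (hl : l ≠ [])
    (hne : ∀ p ∈ l, p.2 ≠ 1)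
    (hch : l.Chain' fun p q => p.1 ≠ q.1) :
    (l.map fun p => CoprodI.of p.2).prod ≠ 1 := by
  classical
  intro h
  have h2 : (CoprodI.Word.equiv (M := M)).symm ⟨l, hne, hch⟩
      = (CoprodI.Word.equiv (M := M)).symm CoprodI.Word.empty := by
    show CoprodI.Word.prod ⟨l, hne, hch⟩ = CoprodI.Word.prod CoprodI.Word.empty
    rw [CoprodI.Word.prod_empty]
    exact h
  have h3 := (CoprodI.Word.equiv (M := M)).symm.injective h2
  exact hl (congrArg CoprodI.Word.toList h3)

section Coprod
open Monoid FreeGroup Subgroup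

lemma chain'_imp_mem {γ : Type*} {l : List γ} {R S : γ → γ → Prop} (h : l.Chain' R)
    (himp : ∀ a ∈ l, ∀ b ∈ l, R a b → S a b) : l.Chain' S := by
  induction l with
  | nil => exact List.isChain_nil
  | cons a l ih =>
    simp only [List.Chain', List.isChain_cons] at h ⊢
    refine ⟨fun b hb => himp a (by simp) b
      (by simp [List.mem_of_mem_head? hb]) (h.1 b hb), ?_⟩
    exact ih h.2 fun x hx y hy hR => himp x (by simp [hx]) y (by simp [hy]) hR

lemma mk_flatten {γ : Type*} : ∀ Bs : List (List (γ × Bool)),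
    FreeGroup.mk Bs.flatten = (Bs.map FreeGroup.mk).prod := by
  intro Bs
  induction Bs with
  | nil => rfl
  | cons B Bs ih => rw [List.flatten_cons, ← FreeGroup.mul_mk, List.map_cons, List.prod_cons, ih]

universe u v

open Monoid in
lemma coprod_hyp_aux {G1 : Type u} {G2 : Type v} [Group G1] [Group G2]
    {X1 X2 : Type} [Finite X1] [Finite X2] [DecidableEq X1] [DecidableEq X2]
    (φ1 : FreeGroup X1 →* G1) (φ2 : FreeGroup X2 →* G2)
    (R1 : Finset (FreeGroup X1)) (R2 : Finset (FreeGroup X2)) (C1 D1 C2 D2 : ℕ)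
    (hsurj1 : Function.Surjective φ1) (hsurj2 : Function.Surjective φ2)
    (hker1 : φ1.ker = Subgroup.normalClosure (R1 : Set (FreeGroup X1)))
    (hker2 : φ2.ker = Subgroup.normalClosure (R2 : Set (FreeGroup X2)))
    (harea1 : ∀ w ∈ φ1.ker, ∃ l : List (FreeGroup X1),
      w = l.prod ∧ l.length ≤ C1 * w.toWord.length + D1 ∧
      ∀ g ∈ l, ∃ r ∈ R1, ∃ c : FreeGroup X1, g = c * r * c⁻¹ ∨ g = c * r⁻¹ * c⁻¹)
    (harea2 : ∀ w ∈ φ2.ker, ∃ l : List (FreeGroup X2),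
      w = l.prod ∧ l.length ≤ C2 * w.toWord.length + D2 ∧
      ∀ g ∈ l, ∃ r ∈ R2, ∃ c : FreeGroup X2, g = c * r * c⁻¹ ∨ g = c * r⁻¹ * c⁻¹) :
    IsHyperbolic (Coprod G1 G2) := by
  classical
  set X : Type := X1 ⊕ X2 with hX
  let φ : FreeGroup X →* Coprod G1 G2 :=
    FreeGroup.lift (Sum.elim (fun x => Coprod.inl (φ1 (FreeGroup.of x)))
      (fun x => Coprod.inr (φ2 (FreeGroup.of x))))
  let j1 : FreeGroup X1 →* FreeGroup X := FreeGroup.map Sum.inl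
  let j2 : FreeGroup X2 →* FreeGroup X := FreeGroup.map Sum.inr
  let π1 : FreeGroup X →* FreeGroup X1 := FreeGroup.lift (Sum.elim FreeGroup.of fun _ => 1)
  let π2 : FreeGroup X →* FreeGroup X2 := FreeGroup.lift (Sum.elim (fun _ => 1) FreeGroup.of)
  have hφj1 : ∀ z, φ (j1 z) = Coprod.inl (φ1 z) := by
    intro z
    refine DFunLike.congr_fun (FreeGroup.ext_hom (φ.comp j1) (Coprod.inl.comp φ1) fun x => ?_) z
    simp only [MonoidHom.comp_apply]
    rw [show j1 (FreeGroup.of x) = FreeGroup.of (Sum.inl x : X) from FreeGroup.map.of]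
    rw [show φ (FreeGroup.of (Sum.inl x : X))
      = Coprod.inl (φ1 (FreeGroup.of x)) from FreeGroup.lift_apply_of]
  have hφj2 : ∀ z, φ (j2 z) = Coprod.inr (φ2 z) := by
    intro z
    refine DFunLike.congr_fun (FreeGroup.ext_hom (φ.comp j2) (Coprod.inr.comp φ2) fun x => ?_) z
    simp only [MonoidHom.comp_apply]
    rw [show j2 (FreeGroup.of x) = FreeGroup.of (Sum.inr x : X) from FreeGroup.map.of]
    rw [show φ (FreeGroup.of (Sum.inr x : X))
      = Coprod.inr (φ2 (FreeGroup.of x)) from FreeGroup.lift_apply_of]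
  have hφsurj : Function.Surjective φ := by
    intro g
    induction g using Coprod.induction_on with
    | inl m => obtain ⟨z, hz⟩ := hsurj1 m; exact ⟨j1 z, by rw [hφj1, hz]⟩
    | inr n => obtain ⟨z, hz⟩ := hsurj2 n; exact ⟨j2 z, by rw [hφj2, hz]⟩
    | mul x y hx hy =>
      obtain ⟨a, ha⟩ := hx; obtain ⟨b, hb⟩ := hy
      exact ⟨a * b, by rw [_root_.map_mul, ha, hb]⟩
  -- norms of projections
  have hπ1norm : ∀ L : List (X × Bool), (π1 (FreeGroup.mk L)).norm ≤ L.length := by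
    intro L
    have := norm_hom_mk_le π1 1 (fun a => ?_) L
    · simpa using this
    · rcases a with x | x
      · rw [show π1 (FreeGroup.of (Sum.inl x : X)) = FreeGroup.of x from FreeGroup.lift_apply_of]
        simp [FreeGroup.norm_of]
      · rw [show π1 (FreeGroup.of (Sum.inr x : X)) = 1 from FreeGroup.lift_apply_of]
        simp [FreeGroup.norm_one]
  have hπ2norm : ∀ L : List (X × Bool), (π2 (FreeGroup.mk L)).norm ≤ L.length := by
    intro L
    have := norm_hom_mk_le π2 1 (fun a => ?_) L
    · simpa using this
    · rcases a with x | x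
      · rw [show π2 (FreeGroup.of (Sum.inl x : X)) = 1 from FreeGroup.lift_apply_of]
        simp [FreeGroup.norm_one]
      · rw [show π2 (FreeGroup.of (Sum.inr x : X)) = FreeGroup.of x from FreeGroup.lift_apply_of]
        simp [FreeGroup.norm_of]
  -- blocks on which all letters are from one side are fixed by j ∘ π
  let side : X × Bool → Bool := fun p => (p.1).isLeft
  have hfix1 : ∀ B : List (X × Bool), (∀ p ∈ B, side p = true) →
      j1 (π1 (FreeGroup.mk B)) = FreeGroup.mk B := by
    intro B
    induction B with
    | nil =>
      intro _
      rw [show FreeGroup.mk ([] : List (X × Bool)) = 1 from rfl, _root_.map_one, _root_.map_one]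
    | cons p B ih =>
      intro h
      obtain ⟨x1, hx⟩ : ∃ x1, p.1 = Sum.inl x1 :=
        Sum.isLeft_iff.1 (h p (List.mem_cons_self))
      rw [mk_cons, _root_.map_mul, _root_.map_mul,
        ih fun q hq => h q (List.mem_cons_of_mem _ hq)]
      congr 1
      obtain ⟨y, b⟩ := p
      simp only at hx
      subst hx
      cases b
      · rw [mk_singleton_false, _root_.map_inv, _root_.map_inv]
        congr 1
      · rw [show FreeGroup.mk [((Sum.inl x1 : X), true)]
            = FreeGroup.of (Sum.inl x1 : X) from rfl,
          show π1 (FreeGroup.of (Sum.inl x1 : X)) = FreeGroup.of x1 from FreeGroup.lift_apply_of,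
          show j1 (FreeGroup.of x1) = FreeGroup.of (Sum.inl x1 : X) from FreeGroup.map.of]
  have hfix2 : ∀ B : List (X × Bool), (∀ p ∈ B, side p = false) →
      j2 (π2 (FreeGroup.mk B)) = FreeGroup.mk B := by
    intro B
    induction B with
    | nil =>
      intro _
      rw [show FreeGroup.mk ([] : List (X × Bool)) = 1 from rfl, _root_.map_one, _root_.map_one]
    | cons p B ih =>
      intro h
      obtain ⟨x1, hx⟩ : ∃ x1, p.1 = Sum.inr x1 := by
        have hps := h p (List.mem_cons_self)
        rcases hp1 : p.1 with y | y
        · rw [show side p = (p.1).isLeft from rfl, hp1] at hps; simp at hps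
        · exact ⟨y, rfl⟩
      rw [mk_cons, _root_.map_mul, _root_.map_mul,
        ih fun q hq => h q (List.mem_cons_of_mem _ hq)]
      congr 1
      obtain ⟨y, b⟩ := p
      simp only at hx
      subst hx
      cases b
      · rw [mk_singleton_false, _root_.map_inv, _root_.map_inv]
        congr 1
      · rw [show FreeGroup.mk [((Sum.inr x1 : X), true)]
            = FreeGroup.of (Sum.inr x1 : X) from rfl,
          show π2 (FreeGroup.of (Sum.inr x1 : X)) = FreeGroup.of x1 from FreeGroup.lift_apply_of,
          show j2 (FreeGroup.of x1) = FreeGroup.of (Sum.inr x1 : X) from FreeGroup.map.of]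
  -- the CoprodI model used to detect nontrivial normal forms
  let M : Bool → Type (max u v) := fun b => cond b (ULift.{v} G1) (ULift.{u} G2)
  letI instM : ∀ b, Group (M b) := fun b => match b with
    | true => (inferInstance : Group (ULift.{v} G1))
    | false => (inferInstance : Group (ULift.{u} G2))
  let A1 : G1 →* CoprodI M :=
    { toFun := fun g => CoprodI.of (M := M) (i := true) (ULift.up g)
      map_one' := _root_.map_one (CoprodI.of (M := M) (i := true))
      map_mul' := fun a b =>
        _root_.map_mul (CoprodI.of (M := M) (i := true)) (ULift.up a) (ULift.up b) }
  let A2 : G2 →* CoprodI M :=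
    { toFun := fun g => CoprodI.of (M := M) (i := false) (ULift.up g)
      map_one' := _root_.map_one (CoprodI.of (M := M) (i := false))
      map_mul' := fun a b =>
        _root_.map_mul (CoprodI.of (M := M) (i := false)) (ULift.up a) (ULift.up b) }
  let αh : Coprod G1 G2 →* CoprodI M := Coprod.lift A1 A2
  have hα1 : ∀ g : G1, αh (Coprod.inl g) = CoprodI.of (M := M) (i := true) (ULift.up g) :=
    fun g => Coprod.lift_apply_inl A1 A2 g
  have hα2 : ∀ g : G2, αh (Coprod.inr g) = CoprodI.of (M := M) (i := false) (ULift.up g) :=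
    fun g => Coprod.lift_apply_inr A1 A2 g
  -- the letter associated to a block
  let elt : List (X × Bool) → Σ b, M b := fun B =>
    match B with
    | [] => ⟨true, 1⟩
    | p :: t =>
      if side p = true then ⟨true, ULift.up (φ1 (π1 (FreeGroup.mk (p :: t))))⟩
      else ⟨false, ULift.up (φ2 (π2 (FreeGroup.mk (p :: t))))⟩
  -- triviality of a block
  let Triv : List (X × Bool) → Prop := fun B =>
    ((∀ p ∈ B, side p = true) ∧ φ1 (π1 (FreeGroup.mk B)) = 1) ∨
      ((∀ p ∈ B, side p = false) ∧ φ2 (π2 (FreeGroup.mk B)) = 1)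
  -- relators and constant
  let RR : Finset (FreeGroup X) := R1.image j1 ∪ R2.image j2
  let K : ℕ := max C1 C2 + max D1 D2
  -- Main induction: linear area bound
  have key : ∀ n : ℕ, ∀ w : FreeGroup X, w.norm ≤ n → φ w = 1 →
      ∃ l : List (FreeGroup X), w = l.prod ∧ l.length ≤ K * w.norm ∧
        ∀ g ∈ l, ConjOf RR g := by
    intro n
    induction n with
    | zero =>
      intro w hwn _
      have : w = 1 := FreeGroup.norm_eq_zero.1 (Nat.le_zero.1 hwn)
      exact ⟨[], by simp [this], by simp, by simp⟩
    | succ n ih =>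
      intro w hwn hw1
      by_cases hw : w = 1
      · exact ⟨[], by simp [hw], by simp, by simp⟩
      set L : List (X × Bool) := w.toWord with hLdef
      have hwL : w = FreeGroup.mk L := FreeGroup.mk_toWord.symm
      have hLne : L ≠ [] := fun h => hw (FreeGroup.toWord_eq_nil_iff.1 (hLdef ▸ h).symm.symm)
      set Bs : List (List (X × Bool)) := blocks side L with hBsdef
      have hBsflat : Bs.flatten = L := blocks_flatten side L
      -- there exists a trivial block
      have htriv : ∃ B ∈ Bs, Triv B := by
        by_contra hno
        push_neg at hno
        -- per-block computation
        have hblock : ∀ B ∈ Bs, αh (φ (FreeGroup.mk B))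
            = (fun p : Σ b, M b => CoprodI.of p.2) (elt B) := by
          intro B hB
          obtain ⟨s, hs⟩ := blocks_const side L B hB
          have hBne := blocks_ne_nil side L B hB
          obtain ⟨p, t, rfl⟩ : ∃ p t, B = p :: t := by
            cases B with
            | nil => exact absurd rfl hBne
            | cons p t => exact ⟨p, t, rfl⟩
          cases hsp : side p with
          | true =>
            have hall : ∀ q ∈ p :: t, side q = true := by
              intro q hq; rw [hs q hq, ← hs p (List.mem_cons_self), hsp]
            have h1 : φ (FreeGroup.mk (p :: t))
                = Coprod.inl (φ1 (π1 (FreeGroup.mk (p :: t)))) := by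
              conv_lhs => rw [← hfix1 _ hall]
              rw [hφj1]
            rw [h1, hα1]
            show _ = CoprodI.of (elt (p :: t)).2
            rw [show elt (p :: t) = ⟨true, ULift.up (φ1 (π1 (FreeGroup.mk (p :: t))))⟩ from
              by simp only [elt, if_pos hsp]]
          | false =>
            have hall : ∀ q ∈ p :: t, side q = false := by
              intro q hq; rw [hs q hq, ← hs p (List.mem_cons_self), hsp]
            have h1 : φ (FreeGroup.mk (p :: t))
                = Coprod.inr (φ2 (π2 (FreeGroup.mk (p :: t)))) := by
              conv_lhs => rw [← hfix2 _ hall]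
              rw [hφj2]
            rw [h1, hα2]
            show _ = CoprodI.of (elt (p :: t)).2
            rw [show elt (p :: t) = ⟨false, ULift.up (φ2 (π2 (FreeGroup.mk (p :: t))))⟩ from by
              have hcond : ¬(side p = true) := by rw [hsp]; exact Bool.false_ne_true
              simp only [elt, if_neg hcond]]
        -- the alternating word
        have hprod : ((Bs.map elt).map fun p : Σ b, M b => CoprodI.of p.2).prod = 1 := by
          calc ((Bs.map elt).map fun p : Σ b, M b => CoprodI.of p.2).prod
              = (Bs.map fun B => αh (φ (FreeGroup.mk B))).prod := by
                rw [List.map_map]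
                exact congrArg List.prod (List.map_congr_left fun B hB => (hblock B hB).symm)
            _ = ((Bs.map FreeGroup.mk).map (αh.comp φ)).prod := by rw [List.map_map]; rfl
            _ = (αh.comp φ) ((Bs.map FreeGroup.mk).prod) := (map_list_prod _ _).symm
            _ = αh (φ w) := by rw [hwL, ← hBsflat, mk_flatten, MonoidHom.comp_apply]
            _ = 1 := by rw [hw1, _root_.map_one]
        have hne : ∀ p ∈ Bs.map elt, p.2 ≠ (1 : M p.1) := by
          intro q hq
          obtain ⟨B, hB, rfl⟩ := List.mem_map.1 hq
          obtain ⟨s, hs⟩ := blocks_const side L B hB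
          have hBne := blocks_ne_nil side L B hB
          obtain ⟨p, t, rfl⟩ : ∃ p t, B = p :: t := by
            cases B with
            | nil => exact absurd rfl hBne
            | cons p t => exact ⟨p, t, rfl⟩
          have hnt := hno (p :: t) hB
          cases hsp : side p with
          | true =>
            have hall : ∀ q ∈ p :: t, side q = true := by
              intro q hq; rw [hs q hq, ← hs p (List.mem_cons_self), hsp]
            have hφ1 : φ1 (π1 (FreeGroup.mk (p :: t))) ≠ 1 := by
              intro hc; exact hnt (Or.inl ⟨hall, hc⟩)
            rw [show elt (p :: t) = ⟨true, ULift.up (φ1 (π1 (FreeGroup.mk (p :: t))))⟩ from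
              by simp only [elt, if_pos hsp]]
            intro hc
            exact hφ1 (congrArg ULift.down hc)
          | false =>
            have hall : ∀ q ∈ p :: t, side q = false := by
              intro q hq; rw [hs q hq, ← hs p (List.mem_cons_self), hsp]
            have hφ2 : φ2 (π2 (FreeGroup.mk (p :: t))) ≠ 1 := by
              intro hc; exact hnt (Or.inr ⟨hall, hc⟩)
            rw [show elt (p :: t) = ⟨false, ULift.up (φ2 (π2 (FreeGroup.mk (p :: t))))⟩ from by
              have hcond : ¬(side p = true) := by rw [hsp]; exact Bool.false_ne_true
              simp only [elt, if_neg hcond]]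
            intro hc
            exact hφ2 (congrArg ULift.down hc)
        have hch : (Bs.map elt).Chain' fun p q => p.1 ≠ q.1 := by
          simp only [List.Chain', List.isChain_map]
          refine chain'_imp_mem (blocks_chain side L) ?_
          intro B hB B' hB' hR
          have hBne := blocks_ne_nil side L B hB
          have hBne' := blocks_ne_nil side L B' hB'
          obtain ⟨p, t, rfl⟩ : ∃ p t, B = p :: t := by
            cases B with
            | nil => exact absurd rfl hBne
            | cons p t => exact ⟨p, t, rfl⟩
          obtain ⟨q, t', rfl⟩ : ∃ q t', B' = q :: t' := by
            cases B' with
            | nil => exact absurd rfl hBne'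
            | cons q t' => exact ⟨q, t', rfl⟩
          have hfst : ∀ (p0 : X × Bool) (t0 : List (X × Bool)),
              (elt (p0 :: t0)).1 = side p0 := by
            intro p0 t0
            by_cases hsp : side p0 = true
            · rw [show elt (p0 :: t0) = ⟨true, ULift.up (φ1 (π1 (FreeGroup.mk (p0 :: t0))))⟩
                from by simp only [elt, if_pos hsp], hsp]
            · rw [show elt (p0 :: t0) = ⟨false, ULift.up (φ2 (π2 (FreeGroup.mk (p0 :: t0))))⟩
                from by simp only [elt, if_neg hsp]]
              simp [Bool.not_eq_true] at hsp
              rw [hsp]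
          rw [hfst p t, hfst q t']
          exact hR p (List.mem_cons_self) q (List.mem_cons_self)
        have hBsne : Bs.map elt ≠ [] := by
          intro hc
          rw [List.map_eq_nil_iff] at hc
          exact hLne (by rw [← hBsflat, hc]; rfl)
        exact alt_prod_ne_one (Bs.map elt) hBsne hne hch hprod
      -- use the trivial block
      obtain ⟨B, hBmem, hBtriv⟩ := htriv
      obtain ⟨Ps, Qs, hsplit⟩ := List.append_of_mem hBmem
      have hBne := blocks_ne_nil side L B hBmem
      have hBpos : 1 ≤ B.length := by
        cases B with
        | nil => exact absurd rfl hBne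
        | cons p t => simp
      have hLsplit : L = Ps.flatten ++ (B ++ Qs.flatten) := by
        rw [← hBsflat, hsplit, List.flatten_append, List.flatten_cons]
      set u : FreeGroup X := FreeGroup.mk Ps.flatten with hu
      set v : FreeGroup X := FreeGroup.mk Qs.flatten with hv
      set s0 : FreeGroup X := FreeGroup.mk B with hs0
      have hwuv : w = u * (s0 * v) := by
        rw [hwL, hLsplit, ← FreeGroup.mul_mk, ← FreeGroup.mul_mk]
      have hLlen : L.length = Ps.flatten.length + (B.length + Qs.flatten.length) := by
        rw [hLsplit]; simp
      -- norms
      have hnormw : w.norm = L.length := rfl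
      have hnormuv : (u * v).norm + B.length ≤ w.norm := by
        have h1 : (u * v).norm ≤ u.norm + v.norm := FreeGroup.norm_mul_le u v
        have h2 : u.norm ≤ Ps.flatten.length := FreeGroup.norm_mk_le
        have h3 : v.norm ≤ Qs.flatten.length := FreeGroup.norm_mk_le
        omega
      -- produce the block decomposition, in both cases
      have hcases : φ s0 = 1 ∧ ∃ l0 : List (FreeGroup X), s0 = l0.prod ∧
          l0.length ≤ K * B.length ∧ ∀ g ∈ l0, ConjOf RR g := by
        rcases hBtriv with ⟨hall, hz⟩ | ⟨hall, hz⟩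
        · have hφs0 : φ s0 = 1 := by
            rw [hs0]
            conv_lhs => rw [← hfix1 B hall]
            rw [hφj1, hz, _root_.map_one]
          obtain ⟨l0, hl0, hlen0, hconj0⟩ := harea1 _ (MonoidHom.mem_ker.2 hz)
          rw [← hs0] at hl0 hlen0
          refine ⟨hφs0, l0.map j1, ?_, ?_, ?_⟩
          · rw [List.prod_hom _ j1, ← hl0, hs0]
            exact (hfix1 B hall).symm
          · rw [List.length_map]
            have hzB : (π1 s0).toWord.length ≤ B.length := by rw [hs0]; exact hπ1norm B
            have e1 : C1 * (π1 s0).toWord.length ≤ C1 * B.length :=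
              Nat.mul_le_mul_left _ hzB
            have e2 : C1 * B.length ≤ max C1 C2 * B.length :=
              Nat.mul_le_mul_right _ (le_max_left _ _)
            have e3 : D1 ≤ max D1 D2 * B.length :=
              le_trans (le_max_left _ _) (Nat.le_mul_of_pos_right _ hBpos)
            have e4 : K * B.length = max C1 C2 * B.length + max D1 D2 * B.length :=
              add_mul _ _ _
            omega
          · intro g hg
            obtain ⟨g0, hg0, rfl⟩ := List.mem_map.1 hg
            refine ConjOf.mono Finset.subset_union_left ?_
            exact ConjOf.map j1 (fun r hr => Finset.mem_image_of_mem j1 hr) (hconj0 g0 hg0)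
        · have hφs0 : φ s0 = 1 := by
            rw [hs0]
            conv_lhs => rw [← hfix2 B hall]
            rw [hφj2, hz, _root_.map_one]
          obtain ⟨l0, hl0, hlen0, hconj0⟩ := harea2 _ (MonoidHom.mem_ker.2 hz)
          rw [← hs0] at hl0 hlen0
          refine ⟨hφs0, l0.map j2, ?_, ?_, ?_⟩
          · rw [List.prod_hom _ j2, ← hl0, hs0]
            exact (hfix2 B hall).symm
          · rw [List.length_map]
            have hzB : (π2 s0).toWord.length ≤ B.length := by rw [hs0]; exact hπ2norm B
            have e1 : C2 * (π2 s0).toWord.length ≤ C2 * B.length :=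
              Nat.mul_le_mul_left _ hzB
            have e2 : C2 * B.length ≤ max C1 C2 * B.length :=
              Nat.mul_le_mul_right _ (le_max_right _ _)
            have e3 : D2 ≤ max D1 D2 * B.length :=
              le_trans (le_max_right _ _) (Nat.le_mul_of_pos_right _ hBpos)
            have e4 : K * B.length = max C1 C2 * B.length + max D1 D2 * B.length :=
              add_mul _ _ _
            omega
          · intro g hg
            obtain ⟨g0, hg0, rfl⟩ := List.mem_map.1 hg
            refine ConjOf.mono Finset.subset_union_right ?_
            exact ConjOf.map j2 (fun r hr => Finset.mem_image_of_mem j2 hr) (hconj0 g0 hg0)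
      obtain ⟨hφs0, l0, hl0prod, hl0len, hl0conj⟩ := hcases
      have hφuv : φ (u * v) = 1 := by
        have h0 := hw1
        rw [hwuv, _root_.map_mul, _root_.map_mul, hφs0, one_mul, ← _root_.map_mul] at h0
        exact h0
      have hnuv : (u * v).norm ≤ n := by omega
      obtain ⟨l2, hl2prod, hl2len, hl2conj⟩ := ih (u * v) hnuv hφuv
      refine ⟨(l0.map fun g => u * g * u⁻¹) ++ l2, ?_, ?_, ?_⟩
      · rw [List.prod_append, prod_map_conj, ← hl0prod, ← hl2prod, hwuv, _root_.mul_assoc]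
        group
      · rw [List.length_append, List.length_map]
        calc l0.length + l2.length ≤ K * B.length + K * (u * v).norm :=
              Nat.add_le_add hl0len hl2len
          _ = K * (B.length + (u * v).norm) := (Nat.mul_add _ _ _).symm
          _ ≤ K * w.norm := Nat.mul_le_mul_left _ (by omega)
      · intro g hg
        rcases List.mem_append.1 hg with hg | hg
        · obtain ⟨g0, hg0, rfl⟩ := List.mem_map.1 hg
          exact (hl0conj g0 hg0).conj u
        · exact hl2conj g hg
  -- assemble the presentation
  have hRRker : (RR : Set (FreeGroup X)) ⊆ (φ.ker : Set (FreeGroup X)) := by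
    intro g hg
    rcases Finset.mem_union.1 (by exact_mod_cast hg) with hg | hg
    · obtain ⟨r1, hr1, rfl⟩ := Finset.mem_image.1 hg
      have hr1k : φ1 r1 = 1 := by
        have : r1 ∈ φ1.ker := by
          rw [hker1]; exact Subgroup.subset_normalClosure (by exact_mod_cast hr1)
        exact MonoidHom.mem_ker.1 this
      simp only [SetLike.mem_coe, MonoidHom.mem_ker]
      rw [hφj1, hr1k, _root_.map_one]
    · obtain ⟨r2, hr2, rfl⟩ := Finset.mem_image.1 hg
      have hr2k : φ2 r2 = 1 := by
        have : r2 ∈ φ2.ker := by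
          rw [hker2]; exact Subgroup.subset_normalClosure (by exact_mod_cast hr2)
        exact MonoidHom.mem_ker.1 this
      simp only [SetLike.mem_coe, MonoidHom.mem_ker]
      rw [hφj2, hr2k, _root_.map_one]
  refine ⟨X, inferInstance, inferInstance, φ, RR, K, 0, hφsurj, ?_, ?_⟩
  · apply le_antisymm
    · intro w hw
      obtain ⟨l, hl, _, hconj⟩ := key w.norm w le_rfl (MonoidHom.mem_ker.1 hw)
      rw [hl]
      exact prod_mem_nc l hconj
    · exact Subgroup.normalClosure_le_normal hRRker
  · intro w hw
    obtain ⟨l, hl, hlen, hconj⟩ := key w.norm w le_rfl (MonoidHom.mem_ker.1 hw)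
    exact ⟨l, hl, by simpa [FreeGroup.norm] using hlen, hconj⟩

end Coprod

open Monoid in
lemma coprod_hyp {G1 : Type u} {G2 : Type v} [Group G1] [Group G2]
    (h1 : IsHyperbolic G1) (h2 : IsHyperbolic G2) : IsHyperbolic (Coprod G1 G2) := by
  obtain ⟨X1, hX1fin, hX1dec, φ1, R1, C1, D1, hsurj1, hker1, harea1⟩ := h1
  obtain ⟨X2, hX2fin, hX2dec, φ2, R2, C2, D2, hsurj2, hker2, harea2⟩ := h2
  exact coprod_hyp_aux φ1 φ2 R1 R2 C1 D1 C2 D2 hsurj1 hsurj2 hker1 hker2 harea1 harea2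

end HypProof

open Monoid in
/-- For finitely generated groups, the free product `G1 * G2` is hyperbolic if and only if
both `G1` and `G2` are hyperbolic. -/
theorem coprod_isHyperbolic_iff (G1 G2 : Type*) [Group G1] [Group G2]
    [Group.FG G1] [Group.FG G2] :
    IsHyperbolic (Coprod G1 G2) ↔ IsHyperbolic G1 ∧ IsHyperbolic G2 := by
  constructor
  · intro h
    exact ⟨HypProof.retract Coprod.inl Coprod.fst (fun x => Coprod.fst_apply_inl x) h,
      HypProof.retract Coprod.inr Coprod.snd (fun x => Coprod.snd_apply_inr x) h⟩
  · rintro ⟨h1, h2⟩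
    exact HypProof.coprod_hyp h1 h2
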